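/- Let J be an n_L×N real matrix with full row rank (rank J = n_L) and Q an N×n_L real matrix such that JQ is invertible. Then S := Q (JQ)⁻¹ is the Moore–Penrose pseudoinverse of J if and only if the column space of Q equals the column space of Jᵀ. (Lemma S3: the dynamical inversion equals the pseudoinverse of J exactly when Condition 2 holds.) -/
import Mathlib


open Matrix

/-- `S` is the Moore–Penrose pseudoinverse of `A`: the four Penrose equations. -/
def IsMoorePenrose {m n : Type*} [Fintype m] [Fintype n]
    (A : Matrix m n ℝ) (S : Matrix n m ℝ) : Prop :=
  A * S * A = A ∧ S * A * S = S ∧ (A * S)ᵀ = A * S ∧ (S * A)ᵀ = S * A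

private lemma range_mul_le {l m n : ℕ} (A : Matrix (Fin l) (Fin m) ℝ)
    (B : Matrix (Fin m) (Fin n) ℝ) :
    LinearMap.range (A * B).mulVecLin ≤ LinearMap.range A.mulVecLin := by
  rw [Matrix.mulVecLin_mul]
  exact LinearMap.range_comp_le_range _ _

/-- Lemma S3: for `J` of full row rank and `JQ` invertible, `Q (JQ)⁻¹` is the
Moore–Penrose pseudoinverse of `J` iff the column space of `Q` equals the
column space of `Jᵀ` (Condition 2). -/
theorem dynamical_inversion_eq_pinv_iff {nL N : ℕ}
    (J : Matrix (Fin nL) (Fin N) ℝ) (Q : Matrix (Fin N) (Fin nL) ℝ)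
    (hrank : J.rank = nL) (hinv : IsUnit (J * Q)) :
    IsMoorePenrose J (Q * (J * Q)⁻¹) ↔
      LinearMap.range Q.mulVecLin = LinearMap.range Jᵀ.mulVecLin := by
  have hdet : IsUnit (J * Q).det := (Matrix.isUnit_iff_isUnit_det _).1 hinv
  set S : Matrix (Fin N) (Fin nL) ℝ := Q * (J * Q)⁻¹ with hS
  have hJS : J * S = 1 := by
    rw [hS, ← Matrix.mul_assoc, Matrix.mul_nonsing_inv _ hdet]
  have hQS : Q = S * (J * Q) := by
    rw [hS, Matrix.mul_assoc, Matrix.nonsing_inv_mul _ hdet, Matrix.mul_one]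
  constructor
  · rintro ⟨h1, h2, h3, h4⟩
    have hsym : Jᵀ * Sᵀ = S * J := by rw [← Matrix.transpose_mul]; exact h4
    have hS' : S = Jᵀ * (Sᵀ * S) := by
      rw [← Matrix.mul_assoc, hsym]; exact h2.symm
    have hJt : Jᵀ = S * (J * Jᵀ) := by
      conv_lhs => rw [← h1]
      rw [Matrix.transpose_mul, Matrix.transpose_mul, ← Matrix.mul_assoc, hsym,
        Matrix.mul_assoc]
    apply le_antisymm
    · calc LinearMap.range Q.mulVecLin
          ≤ LinearMap.range S.mulVecLin := by rw [hQS]; exact range_mul_le _ _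
        _ ≤ LinearMap.range Jᵀ.mulVecLin := by
            conv_lhs => rw [hS']
            exact range_mul_le _ _
    · calc LinearMap.range Jᵀ.mulVecLin
          ≤ LinearMap.range S.mulVecLin := by
            conv_lhs => rw [hJt]
            exact range_mul_le _ _
        _ ≤ LinearMap.range Q.mulVecLin := by rw [hS]; exact range_mul_le _ _
  · intro h
    have hcol : ∀ i : Fin nL, ∃ b : Fin nL → ℝ, Jᵀ.mulVec b = fun j => Q j i := by
      intro i
      have hmem : (fun j => Q j i) ∈ LinearMap.range Q.mulVecLin := by
        refine ⟨Pi.single i 1, ?_⟩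
        ext j
        simp [Matrix.mulVecLin_apply, Matrix.mulVec_single]
      rw [h] at hmem
      exact hmem
    choose b hb using hcol
    set B : Matrix (Fin nL) (Fin nL) ℝ := Matrix.of (fun k i => b i k) with hBdef
    have hQB : Jᵀ * B = Q := by
      ext j i
      have := congrFun (hb i) j
      simpa [Matrix.mulVec, dotProduct, Matrix.mul_apply, hBdef] using this
    have hfac : J * Q = (J * Jᵀ) * B := by rw [Matrix.mul_assoc, hQB]
    have hdet2 : IsUnit ((J * Jᵀ).det * B.det) := by
      rw [← Matrix.det_mul, ← hfac]; exact hdet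
    have hdetJJt : IsUnit (J * Jᵀ).det := isUnit_of_mul_isUnit_left hdet2
    have hdetB : IsUnit B.det := isUnit_of_mul_isUnit_right hdet2
    have hSJ : S * J = Jᵀ * (J * Jᵀ)⁻¹ * J := by
      rw [hS, hfac, ← hQB, Matrix.mul_inv_rev]
      simp only [Matrix.mul_assoc]
      rw [← Matrix.mul_assoc B B⁻¹, Matrix.mul_nonsing_inv _ hdetB, Matrix.one_mul]
    have hsymSJ : (S * J)ᵀ = S * J := by
      rw [hSJ]
      simp only [Matrix.transpose_mul, Matrix.transpose_nonsing_inv,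
        Matrix.transpose_transpose, Matrix.mul_assoc]
    refine ⟨?_, ?_, ?_, hsymSJ⟩
    · rw [hJS, Matrix.one_mul]
    · rw [Matrix.mul_assoc, hJS, Matrix.mul_one]
    · rw [hJS, Matrix.transpose_one]
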